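/- Let (T,d) be a compact ℝ-tree and let ε > 0. Then every collection of pairwise disjoint arcs of length ε in T is finite; that is, if E is a set of pairwise disjoint subsets of T, each of which is the image of an isometric embedding of the real interval [0,ε] into T, then E is a finite set. -/

import Mathlib

open Set

/-- `A` is a topological arc from `x` to `y` in `T`: the image of a continuous injective
map from `[0,1]` sending `0` to `x` and `1` to `y`. -/
def IsTopArc {T : Type*} [MetricSpace T] (A : Set T) (x y : T) : Prop :=
  ∃ f : ℝ → T, ContinuousOn f (Icc 0 1) ∧ InjOn f (Icc 0 1) ∧
    f 0 = x ∧ f 1 = y ∧ f '' Icc 0 1 = A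

/-- `A` is a segment from `x` to `y` in `T`: the image of an isometric embedding of the
real interval `[0, dist x y]` sending the endpoints to `x` and `y`. -/
def IsSegment {T : Type*} [MetricSpace T] (A : Set T) (x y : T) : Prop :=
  ∃ f : ℝ → T,
    (∀ s ∈ Icc (0 : ℝ) (dist x y), ∀ t ∈ Icc (0 : ℝ) (dist x y),
      dist (f s) (f t) = |s - t|) ∧
    f 0 = x ∧ f (dist x y) = y ∧ f '' Icc 0 (dist x y) = A

/-- A metric space `T` is an ℝ-tree if any two points are joined by a segment (an
isometric copy of `[0, dist x y]`) and the topological arc between any two points is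
unique. -/
def IsRTree (T : Type*) [MetricSpace T] : Prop :=
  (∀ x y : T, ∃ A : Set T, IsSegment A x y) ∧
  (∀ x y : T, ∀ A B : Set T, IsTopArc A x y → IsTopArc B x y → A = B)

/-- A subset `C` of an ℝ-tree is convex if it contains the segment between any two of
its points. -/
def RTreeConvex {T : Type*} [MetricSpace T] (C : Set T) : Prop :=
  ∀ x ∈ C, ∀ y ∈ C, ∀ A : Set T, IsSegment A x y → A ⊆ C

/-- The convex hull of a subset of an ℝ-tree: the intersection of all convex subsets
containing it. -/
def rtConvexHull {T : Type*} [MetricSpace T] (S : Set T) : Set T :=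
  ⋂₀ {C : Set T | RTreeConvex C ∧ S ⊆ C}

/-- `A` is an arc of length `ε` in `T`: the image of an isometric embedding of `[0, ε]`. -/
def IsArcOfLength {T : Type*} [MetricSpace T] (ε : ℝ) (A : Set T) : Prop :=
  ∃ f : ℝ → T,
    (∀ s ∈ Icc (0 : ℝ) ε, ∀ t ∈ Icc (0 : ℝ) ε, dist (f s) (f t) = |s - t|) ∧
    f '' Icc 0 ε = A

section Aux

variable {T : Type*} [MetricSpace T]

lemma isom_continuousOn {f : ℝ → T} {L : ℝ}
    (hf : ∀ s ∈ Icc (0:ℝ) L, ∀ t ∈ Icc (0:ℝ) L, dist (f s) (f t) = |s - t|) :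
    ContinuousOn f (Icc 0 L) := by
  apply LipschitzOnWith.continuousOn (K := 1)
  apply LipschitzOnWith.of_dist_le_mul
  intro s hs t ht
  rw [hf s hs t ht]
  simp [Real.dist_eq]

lemma isom_injOn {f : ℝ → T} {L : ℝ}
    (hf : ∀ s ∈ Icc (0:ℝ) L, ∀ t ∈ Icc (0:ℝ) L, dist (f s) (f t) = |s - t|) :
    InjOn f (Icc 0 L) := by
  intro s hs t ht h
  have h2 := hf s hs t ht
  rw [h, dist_self] at h2
  have h3 := abs_eq_zero.mp h2.symm
  linarith [h3]

lemma topArc_of_param {F : ℝ → T} {ℓ : ℝ} {a b : T} (hl : 0 < ℓ)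
    (hcont : ContinuousOn F (Icc 0 ℓ)) (hinj : InjOn F (Icc 0 ℓ))
    (h0 : F 0 = a) (hL : F ℓ = b) : IsTopArc (F '' Icc 0 ℓ) a b := by
  have hmaps : ∀ u ∈ Icc (0:ℝ) 1, u * ℓ ∈ Icc 0 ℓ := by
    intro u hu
    constructor
    · exact mul_nonneg hu.1 hl.le
    · calc u * ℓ ≤ 1 * ℓ := by nlinarith [hu.2, hl.le]
        _ = ℓ := one_mul ℓ
  have himg : (fun u : ℝ => u * ℓ) '' Icc 0 1 = Icc 0 ℓ := by
    rw [image_mul_right_Icc (by norm_num) hl.le]; norm_num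
  refine ⟨fun u => F (u * ℓ), ?_, ?_, by simpa using h0, by simpa using hL, ?_⟩
  · apply hcont.comp ((continuous_mul_right ℓ).continuousOn)
    intro u hu; exact hmaps u hu
  · intro u hu v hv h
    have := hinj (hmaps u hu) (hmaps v hv) h
    exact mul_right_cancel₀ hl.ne' this
  · rw [show (fun u => F (u * ℓ)) = F ∘ (fun u : ℝ => u * ℓ) by rfl, image_comp, himg]

lemma isSegment_isTopArc {A : Set T} {a b : T} (hab : a ≠ b) (hA : IsSegment A a b) :
    IsTopArc A a b := by
  obtain ⟨f, hf, h0, hL, himg⟩ := hA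
  have hpos : 0 < dist a b := dist_pos.mpr hab
  have := topArc_of_param hpos (isom_continuousOn hf) (isom_injOn hf) h0 hL
  rwa [himg] at this

lemma dist_le_left_of_mem_segment {C : Set T} {x y z : T}
    (h : IsSegment C x y) (hz : z ∈ C) : dist x z ≤ dist x y := by
  obtain ⟨f, hf, h0, hL, himg⟩ := h
  rw [← himg] at hz
  obtain ⟨t, ht, rfl⟩ := hz
  have := hf 0 ⟨le_refl 0, dist_nonneg⟩ t ht
  rw [h0] at this
  rw [this]
  rw [abs_of_nonpos (by linarith [ht.1])]
  linarith [ht.2]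

lemma dist_le_right_of_mem_segment {C : Set T} {x y z : T}
    (h : IsSegment C x y) (hz : z ∈ C) : dist z y ≤ dist x y := by
  obtain ⟨f, hf, h0, hL, himg⟩ := h
  rw [← himg] at hz
  obtain ⟨t, ht, rfl⟩ := hz
  have := hf t ht (dist x y) ⟨dist_nonneg, le_refl _⟩
  rw [hL] at this
  rw [this, abs_of_nonpos (by linarith [ht.2])]
  linarith [ht.1]

set_option maxHeartbeats 1000000 in
/-- Key tree lemma: the segment `[a,b]` is contained in the union `[a,c] ∪ [c,b]`. -/
lemma segment_subset_union {T : Type*} [MetricSpace T] (hT : IsRTree T)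
    {A C D : Set T} {a b c : T} (hab : a ≠ b)
    (hA : IsSegment A a b) (hC : IsSegment C a c) (hD : IsSegment D c b) :
    A ⊆ C ∪ D := by
  obtain ⟨g, hg, hg0, hgL, hgimg⟩ := hC
  obtain ⟨h, hh, hh0, hhL, hhimg⟩ := hD
  set L1 := dist a c with hL1
  set L2 := dist c b with hL2
  have hL1n : (0:ℝ) ≤ L1 := dist_nonneg
  have hL2n : (0:ℝ) ≤ L2 := dist_nonneg
  -- clamped parametrizations
  set cl1 : ℝ → ℝ := fun t => min (max t 0) L1 with hcl1
  set cl2 : ℝ → ℝ := fun t => min (max t 0) L2 with hcl2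
  have hcl1mem : ∀ t, cl1 t ∈ Icc 0 L1 := fun t =>
    ⟨le_min (le_max_right t 0) hL1n, min_le_right _ _⟩
  have hcl2mem : ∀ t, cl2 t ∈ Icc 0 L2 := fun t =>
    ⟨le_min (le_max_right t 0) hL2n, min_le_right _ _⟩
  have hcl1id : ∀ t ∈ Icc (0:ℝ) L1, cl1 t = t := by
    intro t ht; simp only [hcl1]; rw [max_eq_left ht.1, min_eq_left ht.2]
  have hcl2id : ∀ t ∈ Icc (0:ℝ) L2, cl2 t = t := by
    intro t ht; simp only [hcl2]; rw [max_eq_left ht.1, min_eq_left ht.2]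
  set gc : ℝ → T := fun t => g (cl1 t) with hgc
  set hc : ℝ → T := fun t => h (cl2 t) with hhc
  have hcl1cont : Continuous cl1 := (continuous_id.max continuous_const).min continuous_const
  have hcl2cont : Continuous cl2 := (continuous_id.max continuous_const).min continuous_const
  have hgccont : Continuous gc :=
    (isom_continuousOn hg).comp_continuous hcl1cont hcl1mem
  have hhccont : Continuous hc :=
    (isom_continuousOn hh).comp_continuous hcl2cont hcl2mem
  have hgceq : ∀ t ∈ Icc (0:ℝ) L1, gc t = g t := fun t ht => by
    simp only [hgc]; rw [hcl1id t ht]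
  have hhceq : ∀ t ∈ Icc (0:ℝ) L2, hc t = h t := fun t ht => by
    simp only [hhc]; rw [hcl2id t ht]
  -- D is closed
  have hDcomp : IsCompact D := by
    rw [← hhimg]; exact isCompact_Icc.image_of_continuousOn (isom_continuousOn hh)
  have hDclosed : IsClosed D := hDcomp.isClosed
  -- the set of times where g enters D
  set S : Set ℝ := Icc 0 L1 ∩ gc ⁻¹' D with hS
  have hSclosed : IsClosed S := isClosed_Icc.inter (hDclosed.preimage hgccont)
  have hcD : c ∈ D := by
    rw [← hhimg]; exact ⟨0, ⟨le_refl 0, hL2n⟩, hh0⟩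
  have hSne : S.Nonempty := by
    refine ⟨L1, ⟨hL1n, le_refl L1⟩, ?_⟩
    show gc L1 ∈ D
    rw [hgceq L1 ⟨hL1n, le_refl L1⟩, hgL]
    exact hcD
  have hSbdd : BddBelow S := (bddBelow_Icc (a := L1) (b := (0:ℝ))).mono inter_subset_left
  set t₀ : ℝ := sInf S with ht₀def
  have ht₀S : t₀ ∈ S := hSclosed.csInf_mem hSne hSbdd
  have ht₀Icc : t₀ ∈ Icc (0:ℝ) L1 := ht₀S.1
  have ht₀D : gc t₀ ∈ D := ht₀S.2
  obtain ⟨s₀, hs₀Icc, hs₀⟩ : ∃ s₀ ∈ Icc (0:ℝ) L2, h s₀ = gc t₀ := by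
    rw [← hhimg] at ht₀D; obtain ⟨s₀, hs, he⟩ := ht₀D; exact ⟨s₀, hs, he⟩
  set ℓ : ℝ := t₀ + (L2 - s₀) with hldef
  have hlt₀ : t₀ ≤ ℓ := by simp only [hldef]; linarith [hs₀Icc.2]
  have hlnn : 0 ≤ ℓ := le_trans ht₀Icc.1 hlt₀
  classical
  set F : ℝ → T := fun u => if u ≤ t₀ then gc u else hc (u - t₀ + s₀) with hF
  have hFcont : Continuous F := by
    apply Continuous.if_le hgccont
      (hhccont.comp (show Continuous fun u : ℝ => u - t₀ + s₀ from (continuous_id.sub continuous_const).add continuous_const)) continuous_id continuous_const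
    intro x hx
    rw [show x = t₀ from hx]
    show gc t₀ = hc (t₀ - t₀ + s₀)
    rw [show t₀ - t₀ + s₀ = s₀ by ring, hhceq s₀ hs₀Icc, hs₀]
  -- description of F on the two pieces
  have hFg : ∀ u, 0 ≤ u → u ≤ t₀ → F u = g u := by
    intro u h0 h1
    simp only [hF, if_pos h1]
    exact hgceq u ⟨h0, le_trans h1 ht₀Icc.2⟩
  have hFh : ∀ u, t₀ < u → u ≤ ℓ → F u = h (u - t₀ + s₀) := by
    intro u h0 h1
    simp only [hF, if_neg (not_le.mpr h0)]
    apply hhceq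
    constructor
    · linarith [hs₀Icc.1]
    · simp only [hldef] at h1; linarith
  have hmemIcc2 : ∀ u, t₀ < u → u ≤ ℓ → u - t₀ + s₀ ∈ Icc (0:ℝ) L2 := by
    intro u h0 h1
    constructor
    · linarith [hs₀Icc.1]
    · simp only [hldef] at h1; linarith
  have hF0 : F 0 = a := by rw [hFg 0 (le_refl 0) ht₀Icc.1, hg0]
  have hFl : F ℓ = b := by
    rcases eq_or_lt_of_le hlt₀ with heq | hlt
    · have hs₀L2 : s₀ = L2 := by simp only [hldef] at heq; linarith
      rw [← heq, hFg t₀ ht₀Icc.1 (le_refl t₀)]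
      have : g t₀ = gc t₀ := (hgceq t₀ ht₀Icc).symm
      rw [this, ← hs₀, hs₀L2, hhL]
    · rw [hFh ℓ hlt (le_refl ℓ), show ℓ - t₀ + s₀ = L2 by simp only [hldef]; ring, hhL]
  -- minimality of t₀
  have hmin : ∀ u, 0 ≤ u → u < t₀ → gc u ∉ D := by
    intro u h0 h1 hu
    have : u ∈ S := ⟨⟨h0, le_trans h1.le ht₀Icc.2⟩, hu⟩
    have := csInf_le hSbdd this
    simp only [← ht₀def] at this
    linarith
  -- injectivity
  have hinj : InjOn F (Icc 0 ℓ) := by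
    have key : ∀ u ∈ Icc (0:ℝ) ℓ, ∀ v ∈ Icc (0:ℝ) ℓ, u ≤ v → F u = F v → u = v := by
      intro u hu v hv huv heq
      by_cases hv' : v ≤ t₀
      · have hu' : u ≤ t₀ := le_trans huv hv'
        rw [hFg u hu.1 hu', hFg v hv.1 hv'] at heq
        exact isom_injOn hg ⟨hu.1, le_trans hu' ht₀Icc.2⟩
          ⟨hv.1, le_trans hv' ht₀Icc.2⟩ heq
      · push_neg at hv'
        rw [hFh v hv' hv.2] at heq
        by_cases hu' : u ≤ t₀
        · rcases lt_or_eq_of_le hu' with hlt | heq'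
          · exfalso
            apply hmin u hu.1 hlt
            rw [show gc u = F u from (by simp only [hF, if_pos hu']), heq]
            rw [← hhimg]
            exact ⟨v - t₀ + s₀, hmemIcc2 v hv' hv.2, rfl⟩
          · exfalso
            have hFu : F u = h s₀ := by
              rw [hFg u hu.1 hu', heq', ← hgceq t₀ ht₀Icc, ← hs₀]
            rw [hFu] at heq
            have hvv := isom_injOn hh hs₀Icc (hmemIcc2 v hv' hv.2) heq
            linarith
        · push_neg at hu'
          rw [hFh u hu' hu.2] at heq
          have := isom_injOn hh (hmemIcc2 u hu' hu.2) (hmemIcc2 v hv' hv.2) heq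
          linarith
    intro u hu v hv heq
    rcases le_total u v with h' | h'
    · exact key u hu v hv h' heq
    · exact (key v hv u hu h' heq.symm).symm
  -- positivity of ℓ
  have hlpos : 0 < ℓ := by
    rcases eq_or_lt_of_le hlnn with heq | h
    · exfalso
      apply hab
      rw [← hF0, ← hFl, ← heq]
    · exact h
  -- image inside C ∪ D
  have himgsub : F '' Icc 0 ℓ ⊆ C ∪ D := by
    rintro x ⟨u, hu, rfl⟩
    by_cases hu' : u ≤ t₀
    · left
      rw [hFg u hu.1 hu', ← hgimg]
      exact ⟨u, ⟨hu.1, le_trans hu' ht₀Icc.2⟩, rfl⟩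
    · right
      push_neg at hu'
      rw [hFh u hu' hu.2, ← hhimg]
      exact ⟨u - t₀ + s₀, hmemIcc2 u hu' hu.2, rfl⟩
  -- conclude with uniqueness of arcs
  have harcF : IsTopArc (F '' Icc 0 ℓ) a b :=
    topArc_of_param hlpos hFcont.continuousOn hinj hF0 hFl
  have harcA : IsTopArc A a b := isSegment_isTopArc hab hA
  have := hT.2 a b A (F '' Icc 0 ℓ) harcA harcF
  rw [this]
  exact himgsub

end Aux

/-- In a compact ℝ-tree, any collection of pairwise disjoint arcs of a
fixed length `ε > 0` is finite. -/
theorem finite_of_pairwise_disjoint_arcs {T : Type*} [MetricSpace T] [CompactSpace T]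
    (hT : IsRTree T) (ε : ℝ) (hε : 0 < ε) (E : Set (Set T))
    (hdisj : E.Pairwise Disjoint) (harc : ∀ A ∈ E, IsArcOfLength ε A) :
    E.Finite := by
  by_contra hfin
  have hinf : E.Infinite := hfin
  haveI := hinf.to_subtype
  -- choose parametrizations
  have hchoice : ∀ A : E, ∃ f : ℝ → T,
      (∀ s ∈ Icc (0:ℝ) ε, ∀ t ∈ Icc (0:ℝ) ε, dist (f s) (f t) = |s - t|) ∧
      f '' Icc 0 ε = (A : Set T) := fun A => harc A.1 A.2
  choose f hf himg using hchoice
  -- finite ε/8-net of T × T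
  obtain ⟨s, -, hsfin, hscover⟩ :=
    finite_cover_balls_of_compact (isCompact_univ : IsCompact (univ : Set (T × T)))
      (show (0:ℝ) < ε/8 by linarith)
  haveI := hsfin.to_subtype
  have hcover : ∀ p : T × T, ∃ c : s, p ∈ Metric.ball (c : T × T) (ε/8) := by
    intro p
    have := hscover (mem_univ p)
    simp only [mem_iUnion] at this
    obtain ⟨c, hc, hpc⟩ := this
    exact ⟨⟨c, hc⟩, hpc⟩
  set φ : E → T × T := fun A => (f A 0, f A ε) with hφ
  set ψ : E → s := fun A => (hcover (φ A)).choose with hψ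
  obtain ⟨A, B, hne, heq⟩ := Finite.exists_ne_map_eq_of_infinite ψ
  have hA' := (hcover (φ A)).choose_spec
  have hB' := (hcover (φ B)).choose_spec
  rw [show (hcover (φ A)).choose = ψ A from rfl, heq, ← show (hcover (φ B)).choose = ψ B from rfl]
    at hA'
  have hdistAB : dist (φ A) (φ B) < ε/4 := by
    have h1 := Metric.mem_ball.mp hA'
    have h2 := Metric.mem_ball.mp hB'
    calc dist (φ A) (φ B) ≤ dist (φ A) ((hcover (φ B)).choose : T × T)
          + dist ((hcover (φ B)).choose : T × T) (φ B) := dist_triangle _ _ _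
      _ < ε/8 + ε/8 := by rw [dist_comm ((hcover (φ B)).choose : T × T) (φ B)]; linarith
      _ = ε/4 := by ring
  set a : T := f A 0 with ha
  set b : T := f A ε with hb
  set a' : T := f B 0 with ha'
  set b' : T := f B ε with hb'
  set m : T := f A (ε/2) with hm
  have h0mem : (0:ℝ) ∈ Icc (0:ℝ) ε := ⟨le_refl 0, hε.le⟩
  have hεmem : ε ∈ Icc (0:ℝ) ε := ⟨hε.le, le_refl ε⟩
  have hmmem : ε/2 ∈ Icc (0:ℝ) ε := ⟨by linarith, by linarith⟩
  have hdab : dist a b = ε := by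
    rw [ha, hb, hf A 0 h0mem ε hεmem]; rw [abs_of_nonpos (by linarith)]; ring
  have hda'b' : dist a' b' = ε := by
    rw [ha', hb', hf B 0 h0mem ε hεmem]; rw [abs_of_nonpos (by linarith)]; ring
  have hdam : dist a m = ε/2 := by
    rw [ha, hm, hf A 0 h0mem (ε/2) hmmem]; rw [abs_of_nonpos (by linarith)]; ring
  have hdmb : dist m b = ε/2 := by
    rw [hm, hb, hf A (ε/2) hmmem ε hεmem]; rw [abs_of_nonpos (by linarith)]; ring
  have hdaa' : dist a a' < ε/4 := by
    calc dist a a' ≤ dist (φ A) (φ B) := by rw [Prod.dist_eq]; exact le_max_left _ _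
      _ < ε/4 := hdistAB
  have hdbb' : dist b b' < ε/4 := by
    calc dist b b' ≤ dist (φ A) (φ B) := by rw [Prod.dist_eq]; exact le_max_right _ _
      _ < ε/4 := hdistAB
  -- A and B as segments
  have hAseg : IsSegment (A : Set T) a b := by
    refine ⟨f A, ?_, rfl, ?_, ?_⟩
    · rw [hdab]; exact hf A
    · rw [hdab]
    · rw [hdab]; exact himg A
  have hBseg : IsSegment (B : Set T) a' b' := by
    refine ⟨f B, ?_, rfl, ?_, ?_⟩
    · rw [hda'b']; exact hf B
    · rw [hda'b']
    · rw [hda'b']; exact himg B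
  have hab : a ≠ b := by
    intro h; rw [h, dist_self] at hdab; linarith
  have ha'b : a' ≠ b := by
    have h1 := dist_triangle a a' b
    have h2 : 0 < dist a' b := by rw [hdab] at h1; linarith
    exact dist_pos.mp h2
  obtain ⟨C, hC⟩ := hT.1 a a'
  obtain ⟨Dm, hDm⟩ := hT.1 a' b
  obtain ⟨D2, hD2⟩ := hT.1 b' b
  have hmA : m ∈ (A : Set T) := by
    rw [← himg A]; exact ⟨ε/2, hmmem, rfl⟩
  have step1 : (A : Set T) ⊆ C ∪ Dm := segment_subset_union hT hab hAseg hC hDm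
  have hmCD : m ∈ C ∪ Dm := step1 hmA
  have hmnC : m ∉ C := by
    intro hmC
    have := dist_le_left_of_mem_segment hC hmC
    rw [hdam] at this
    linarith
  have hmDm : m ∈ Dm := hmCD.resolve_left hmnC
  have step2 : Dm ⊆ (B : Set T) ∪ D2 := segment_subset_union hT ha'b hDm hBseg hD2
  have hmBD : m ∈ (B : Set T) ∪ D2 := step2 hmDm
  have hmnD2 : m ∉ D2 := by
    intro hmD2
    have h1 := dist_le_right_of_mem_segment hD2 hmD2
    have h2 := dist_triangle m b' b
    have h3 := dist_le_left_of_mem_segment hD2 hmD2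
    rw [dist_comm b' b] at h1 h3
    rw [dist_comm m b'] at h2
    rw [hdmb] at *
    linarith [dist_comm b b' ▸ hdbb']
  have hmB : m ∈ (B : Set T) := hmBD.resolve_right hmnD2
  have hABne : (A : Set T) ≠ (B : Set T) := fun h => hne (Subtype.ext h)
  have hdj : Disjoint (A : Set T) (B : Set T) := hdisj A.2 B.2 hABne
  exact (Set.disjoint_left.mp hdj hmA) hmB
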